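/- Let 𝔤 be a finite-dimensional real Lie algebra with a vector space direct sum decomposition 𝔤 = 𝔨 ⊕ 𝔞 ⊕ 𝔳 ⊕ 𝔷 in which 𝔨 is a Lie subalgebra, 𝔞 = ℝB is one-dimensional, and the bracket satisfies [𝔨,B] = 0, [𝔨,𝔳] ⊆ 𝔳, [𝔨,𝔷] ⊆ 𝔷, [B,V] = V for all V ∈ 𝔳, [B,Z] = 2Z for all Z ∈ 𝔷, [𝔳,𝔳] ⊆ 𝔷, [𝔳,𝔷] = 0 and [𝔷,𝔷] = 0. Write 𝔫 = 𝔳 ⊕ 𝔷, fix an inner product on 𝔞 ⊕ 𝔫 in which 𝔞, 𝔳, 𝔷 are mutually orthogonal and for which ad(T)|𝔫 is skew-symmetric for every T ∈ 𝔨, and let π : 𝔤 → 𝔨 and τ : 𝔤 → 𝔞 ⊕ 𝔫 be the projections. Let 𝔰 ⊆ 𝔤 be a Lie subalgebra with 𝔰_c := π(𝔰) abelian and B ∈ 𝔰_n := τ(𝔰), and let B̃ ∈ 𝔰_c be any element with B̃ + B ∈ 𝔰. Then [B̃, 𝔰_n] ⊆ 𝔰_n, i.e. 𝔰_n is normalized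 by B̃. -/

import Mathlib

open scoped RealInnerProductSpace

private lemma trace_formula' {E : Type*} [NormedAddCommGroup E] [InnerProductSpace ℝ E]
    [FiniteDimensional ℝ E] (f : E →ₗ[ℝ] E) :
    LinearMap.trace ℝ E f =
      ∑ i, ⟪(stdOrthonormalBasis ℝ E) i, f ((stdOrthonormalBasis ℝ E) i)⟫ := by
  set b := stdOrthonormalBasis ℝ E
  rw [LinearMap.trace_eq_matrix_trace ℝ b.toBasis, Matrix.trace]
  apply Finset.sum_congr rfl
  intro i _
  rw [Matrix.diag_apply, LinearMap.toMatrix_apply, b.coe_toBasis_repr_apply,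
    b.repr_apply_apply, b.coe_toBasis]

private lemma adjoint_mem_of_invariant' {E : Type*} [NormedAddCommGroup E]
    [InnerProductSpace ℝ E] [FiniteDimensional ℝ E] (T : E →ₗ[ℝ] E)
    (hn : T * LinearMap.adjoint T = LinearMap.adjoint T * T)
    (W : Submodule ℝ E) (hW : ∀ x ∈ W, T x ∈ W) :
    ∀ x ∈ W, LinearMap.adjoint T x ∈ W := by
  haveI := FiniteDimensional.complete ℝ E
  set p : E →ₗ[ℝ] E := W.subtype ∘ₗ (W.orthogonalProjection).toLinearMap with hpdef
  have hp_apply : ∀ x : E, p x = (W.orthogonalProjection x : E) := fun x => rfl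
  have hp_mem : ∀ x, p x ∈ W := fun x => (W.orthogonalProjection x).2
  have hp_id : ∀ x ∈ W, p x = x := by
    intro x hx
    have h := Submodule.orthogonalProjection_mem_subspace_eq_self (⟨x, hx⟩ : W)
    have := congrArg (Subtype.val) h
    simpa [hp_apply] using this
  have hpp : p * p = p := by
    ext x
    exact hp_id _ (hp_mem x)
  have hpadj : LinearMap.adjoint p = p := by
    refine ((LinearMap.eq_adjoint_iff p p).mpr ?_).symm
    intro x y
    have h := Submodule.inner_starProjection_left_eq_right W x y
    rw [Submodule.starProjection_apply, Submodule.starProjection_apply] at h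
    rw [hp_apply, hp_apply]
    exact h
  have hTp : p * T * p = T * p := by
    ext x
    exact hp_id _ (hW _ (hp_mem x))
  set S := LinearMap.adjoint T with hS
  set G : E →ₗ[ℝ] E := S * p - p * S * p with hG
  have h2 : ∀ X : E →ₗ[ℝ] E, p * (p * X) = p * X := fun X => by rw [← mul_assoc, hpp]
  have h3 : ∀ X : E →ₗ[ℝ] E, p * (T * (p * X)) = T * (p * X) := fun X => by
    rw [← mul_assoc, ← mul_assoc, hTp, mul_assoc]
  have h4 : p * (T * p) = T * p := by rw [← mul_assoc, hTp]
  have hGadj : LinearMap.adjoint G = p * T - p * T * p := by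
    rw [hG, map_sub]
    simp only [Module.End.mul_eq_comp, LinearMap.adjoint_comp, hpadj, hS,
      LinearMap.adjoint_adjoint]
    simp [LinearMap.comp_assoc]
  have htr : LinearMap.trace ℝ E (LinearMap.adjoint G * G) = 0 := by
    rw [hGadj, hG]
    have expand : (p * T - p * T * p) * (S * p - p * S * p)
        = p * (T * (S * p)) - T * (p * (S * p)) := by
      noncomm_ring [hpp, hTp, h2, h3, h4]
    rw [expand, map_sub]
    have t1 : LinearMap.trace ℝ E (p * (T * (S * p))) = LinearMap.trace ℝ E (S * (T * p)) := by
      rw [LinearMap.trace_mul_comm]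
      have : T * (S * p) * p = T * (S * p) := by
        rw [mul_assoc, mul_assoc, hpp]
      rw [this, ← mul_assoc, hn, mul_assoc]
    have t2 : LinearMap.trace ℝ E (T * (p * (S * p))) = LinearMap.trace ℝ E (S * (T * p)) := by
      have e : T * (p * (S * p)) = (T * p) * (S * p) := by rw [mul_assoc]
      rw [e, LinearMap.trace_mul_comm]
      have e2 : S * p * (T * p) = S * (T * p) := by
        rw [mul_assoc, h4]
      rw [e2]
    rw [t1, t2, sub_self]
  have hGzero : G = 0 := by
    set b := stdOrthonormalBasis ℝ E with hb
    have h0 : ∑ i, ⟪G (b i), G (b i)⟫ = 0 := by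
      have hf := trace_formula' (LinearMap.adjoint G * G)
      rw [htr] at hf
      rw [← hb] at hf
      have : ∀ i : Fin (Module.finrank ℝ E),
          ⟪b i, (LinearMap.adjoint G * G) (b i)⟫ = ⟪G (b i), G (b i)⟫ := by
        intro i
        rw [Module.End.mul_apply, LinearMap.adjoint_inner_right]
      rw [← Finset.sum_congr rfl (fun i _ => this i)]
      exact hf.symm
    have hz : ∀ i, G (b i) = 0 := by
      intro i
      have hnn : ∀ i ∈ Finset.univ, (0:ℝ) ≤ ⟪G (b i), G (b i)⟫ := fun i _ =>
        real_inner_self_nonneg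
      have := (Finset.sum_eq_zero_iff_of_nonneg hnn).mp h0 i (Finset.mem_univ i)
      exact inner_self_eq_zero.mp this
    apply b.toBasis.ext
    intro i
    rw [b.coe_toBasis]
    simpa using hz i
  intro x hx
  have hGx : G x = 0 := by rw [hGzero]; rfl
  have hsub : S x - p (S x) = 0 := by
    have e : G x = S x - p (S x) := by
      simp only [hG, LinearMap.sub_apply, Module.End.mul_apply, hp_id x hx]
    rwa [← e]
  have h5 : S x = p (S x) := sub_eq_zero.mp hsub
  show S x ∈ W
  rw [h5]
  exact hp_mem _

/-- In the setting of the Iwasawa decomposition `𝔤 = 𝔨 ⊕ ℝB ⊕ 𝔳 ⊕ 𝔷` of a rank-one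
symmetric space of noncompact type: if `𝔰` is a Lie subalgebra with `𝔰_c = π 𝔰` abelian
and `B ∈ 𝔰_n = τ 𝔰`, and `B̃ ∈ 𝔰_c` satisfies `B̃ + B ∈ 𝔰`, then `[B̃, 𝔰_n] ⊆ 𝔰_n`,
i.e. `𝔰_n` is normalized by `B̃`. -/
theorem sn_normalized_by_Btilde
    (g : Type*) [LieRing g] [LieAlgebra ℝ g] [FiniteDimensional ℝ g]
    (𝔨 : LieSubalgebra ℝ g) (B : g) (hB : B ≠ 0) (𝔳 𝔷 : Submodule ℝ g)
    -- vector space direct sum decomposition 𝔤 = 𝔨 ⊕ ℝB ⊕ 𝔳 ⊕ 𝔷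
    (hsum : 𝔨.toSubmodule ⊔ Submodule.span ℝ {B} ⊔ 𝔳 ⊔ 𝔷 = ⊤)
    (hindep : ∀ T ∈ 𝔨, ∀ t : ℝ, ∀ V ∈ 𝔳, ∀ Z ∈ 𝔷,
      T + t • B + V + Z = 0 → T = 0 ∧ t = 0 ∧ V = 0 ∧ Z = 0)
    -- bracket relations
    (hkB : ∀ T ∈ 𝔨, ⁅T, B⁆ = 0)
    (hkv : ∀ T ∈ 𝔨, ∀ V ∈ 𝔳, ⁅T, V⁆ ∈ 𝔳)
    (hkz : ∀ T ∈ 𝔨, ∀ Z ∈ 𝔷, ⁅T, Z⁆ ∈ 𝔷)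
    (hBv : ∀ V ∈ 𝔳, ⁅B, V⁆ = V)
    (hBz : ∀ Z ∈ 𝔷, ⁅B, Z⁆ = (2 : ℝ) • Z)
    (hvv : ∀ V ∈ 𝔳, ∀ W ∈ 𝔳, ⁅V, W⁆ ∈ 𝔷)
    (hvz : ∀ V ∈ 𝔳, ∀ Z ∈ 𝔷, ⁅V, Z⁆ = 0)
    (hzz : ∀ Z ∈ 𝔷, ∀ Z' ∈ 𝔷, ⁅Z, Z'⁆ = 0)
    -- an inner product on ℝB ⊕ 𝔳 ⊕ 𝔷: ℝB, 𝔳, 𝔷 mutually orthogonal,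
    -- and ad(T)|𝔫 skew-symmetric for every T ∈ 𝔨
    (ip : g →ₗ[ℝ] g →ₗ[ℝ] ℝ)
    (hip_symm : ∀ x y : g, ip x y = ip y x)
    (hip_pos : ∀ x ∈ Submodule.span ℝ {B} ⊔ 𝔳 ⊔ 𝔷, x ≠ 0 → 0 < ip x x)
    (horthBv : ∀ V ∈ 𝔳, ip B V = 0)
    (horthBz : ∀ Z ∈ 𝔷, ip B Z = 0)
    (horthvz : ∀ V ∈ 𝔳, ∀ Z ∈ 𝔷, ip V Z = 0)
    (hskew : ∀ T ∈ 𝔨, ∀ X ∈ 𝔳 ⊔ 𝔷, ∀ Y ∈ 𝔳 ⊔ 𝔷, ip ⁅T, X⁆ Y = -ip X ⁅T, Y⁆)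
    -- the projections π : 𝔤 → 𝔨 and τ : 𝔤 → ℝB ⊕ 𝔳 ⊕ 𝔷
    (π τ : g →ₗ[ℝ] g)
    (hπ : ∀ x : g, π x ∈ 𝔨.toSubmodule)
    (hτ : ∀ x : g, τ x ∈ Submodule.span ℝ {B} ⊔ 𝔳 ⊔ 𝔷)
    (hπτ : ∀ x : g, π x + τ x = x)
    -- the subalgebra 𝔰, with 𝔰_c = π(𝔰) abelian and B ∈ 𝔰_n = τ(𝔰)
    (𝔰 : LieSubalgebra ℝ g)
    (hsc : ∀ x ∈ Submodule.map π 𝔰.toSubmodule, ∀ y ∈ Submodule.map π 𝔰.toSubmodule,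
      ⁅x, y⁆ = 0)
    (hBsn : B ∈ Submodule.map τ 𝔰.toSubmodule)
    -- the element B̃ ∈ 𝔰_c with B̃ + B ∈ 𝔰
    (Btil : g) (hBtil_c : Btil ∈ Submodule.map π 𝔰.toSubmodule) (hBtilB : Btil + B ∈ 𝔰) :
    ∀ x ∈ Submodule.map τ 𝔰.toSubmodule, ⁅Btil, x⁆ ∈ Submodule.map τ 𝔰.toSubmodule := by
  classical
  set N : Submodule ℝ g := Submodule.span ℝ {B} ⊔ 𝔳 ⊔ 𝔷 with hN
  set 𝔰n : Submodule ℝ g := Submodule.map τ 𝔰.toSubmodule with h𝔰n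
  have h𝔳N : 𝔳 ≤ N := le_sup_right.trans le_sup_left
  have h𝔷N : 𝔷 ≤ N := le_sup_right
  have hBN : B ∈ N := by
    have h1 : Submodule.span ℝ {B} ≤ N := le_sup_left.trans le_sup_left
    exact h1 (Submodule.mem_span_singleton_self B)
  have hτN : ∀ x : g, τ x ∈ N := hτ
  have hdec : ∀ x ∈ N, ∃ t : ℝ, ∃ V ∈ 𝔳, ∃ Z ∈ 𝔷, x = t • B + V + Z := by
    intro x hx
    rcases Submodule.mem_sup.mp hx with ⟨y, hy, Z, hZ, rfl⟩
    rcases Submodule.mem_sup.mp hy with ⟨w, hw, V, hV, rfl⟩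
    rcases Submodule.mem_span_singleton.mp hw with ⟨t, rfl⟩
    exact ⟨t, V, hV, Z, hZ, rfl⟩
  have hBtilk : Btil ∈ 𝔨 := by
    obtain ⟨s, -, rfl⟩ := hBtil_c
    exact hπ s
  have hBtilB0 : ⁅Btil, B⁆ = 0 := hkB Btil hBtilk
  have hτ_id : ∀ y ∈ N, τ y = y := by
    intro y hy
    have hπy : π y = y - τ y := eq_sub_of_add_eq (hπτ y)
    have hmem : π y ∈ N := by
      rw [hπy]; exact Submodule.sub_mem N hy (hτN y)
    obtain ⟨t, V, hV, Z, hZ, hdecEq⟩ := hdec _ hmem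
    have h0 : π y + (-t) • B + (-V) + (-Z) = 0 := by
      rw [hdecEq, neg_smul]; abel
    obtain ⟨hπ0, -, -, -⟩ := hindep (π y) (hπ y) (-t) (-V) (Submodule.neg_mem _ hV)
      (-Z) (Submodule.neg_mem _ hZ) h0
    have := hπτ y
    rw [hπ0, zero_add] at this
    exact this
  -- the operators D = ad(B̃+B) and E = ad(B) - ad(B̃)
  set Dg : g →ₗ[ℝ] g := LieAlgebra.ad ℝ g (Btil + B) with hDg
  set Eg : g →ₗ[ℝ] g := LieAlgebra.ad ℝ g B - LieAlgebra.ad ℝ g Btil with hEg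
  have hDg_apply : ∀ x : g, Dg x = ⁅Btil, x⁆ + ⁅B, x⁆ := by
    intro x; simp [hDg, LieAlgebra.ad_apply, add_lie]
  have hEg_apply : ∀ x : g, Eg x = ⁅B, x⁆ - ⁅Btil, x⁆ := by
    intro x; simp [hEg, LieAlgebra.ad_apply]
  have hlieB : ∀ (t : ℝ), ∀ V ∈ 𝔳, ∀ Z ∈ 𝔷, ⁅B, t • B + V + Z⁆ = V + (2:ℝ) • Z := by
    intro t V hV Z hZ
    simp [lie_add, lie_smul, lie_self, hBv V hV, hBz Z hZ]
  have hlieBtil : ∀ (t : ℝ) (V Z : g), ⁅Btil, t • B + V + Z⁆ = ⁅Btil, V⁆ + ⁅Btil, Z⁆ := by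
    intro t V Z
    simp [lie_add, lie_smul, hBtilB0]
  have hDmaps : ∀ x ∈ N, Dg x ∈ N := by
    intro x hx
    obtain ⟨t, V, hV, Z, hZ, rfl⟩ := hdec x hx
    rw [hDg_apply, hlieB t V hV Z hZ, hlieBtil]
    exact Submodule.add_mem N
      (Submodule.add_mem N (h𝔳N (hkv Btil hBtilk V hV)) (h𝔷N (hkz Btil hBtilk Z hZ)))
      (Submodule.add_mem N (h𝔳N hV) (Submodule.smul_mem N _ (h𝔷N hZ)))
  have hEmaps : ∀ x ∈ N, Eg x ∈ N := by
    intro x hx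
    obtain ⟨t, V, hV, Z, hZ, rfl⟩ := hdec x hx
    rw [hEg_apply, hlieB t V hV Z hZ, hlieBtil]
    exact Submodule.sub_mem N
      (Submodule.add_mem N (h𝔳N hV) (Submodule.smul_mem N _ (h𝔷N hZ)))
      (Submodule.add_mem N (h𝔳N (hkv Btil hBtilk V hV)) (h𝔷N (hkz Btil hBtilk Z hZ)))
  -- symmetry: ip (Eg x) y = ip x (Dg y) on N
  have hsym : ∀ x ∈ N, ∀ y ∈ N, ip (Eg x) y = ip x (Dg y) := by
    intro x hx y hy
    obtain ⟨t, V, hV, Z, hZ, rfl⟩ := hdec x hx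
    obtain ⟨t', V', hV', Z', hZ', rfl⟩ := hdec y hy
    rw [hEg_apply, hDg_apply, hlieB t V hV Z hZ, hlieBtil,
      hlieB t' V' hV' Z' hZ', hlieBtil]
    have kV : ⁅Btil, V⁆ ∈ 𝔳 := hkv Btil hBtilk V hV
    have kZ : ⁅Btil, Z⁆ ∈ 𝔷 := hkz Btil hBtilk Z hZ
    have kV' : ⁅Btil, V'⁆ ∈ 𝔳 := hkv Btil hBtilk V' hV'
    have kZ' : ⁅Btil, Z'⁆ ∈ 𝔷 := hkz Btil hBtilk Z' hZ'
    have z1 : ip V B = 0 := by rw [hip_symm]; exact horthBv V hV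
    have z2 : ip Z B = 0 := by rw [hip_symm]; exact horthBz Z hZ
    have z3 : ip B V' = 0 := horthBv V' hV'
    have z4 : ip B Z' = 0 := horthBz Z' hZ'
    have z5 : ip V Z' = 0 := horthvz V hV Z' hZ'
    have z6 : ip Z V' = 0 := by rw [hip_symm]; exact horthvz V' hV' Z hZ
    have z7 : ip ⁅Btil, V⁆ B = 0 := by rw [hip_symm]; exact horthBv _ kV
    have z8 : ip ⁅Btil, Z⁆ B = 0 := by rw [hip_symm]; exact horthBz _ kZ
    have z9 : ip B ⁅Btil, V'⁆ = 0 := horthBv _ kV'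
    have z10 : ip B ⁅Btil, Z'⁆ = 0 := horthBz _ kZ'
    have z11 : ip ⁅Btil, V⁆ Z' = 0 := horthvz _ kV Z' hZ'
    have z12 : ip ⁅Btil, Z⁆ V' = 0 := by rw [hip_symm]; exact horthvz V' hV' _ kZ
    have z13 : ip V ⁅Btil, Z'⁆ = 0 := horthvz V hV _ kZ'
    have z14 : ip Z ⁅Btil, V'⁆ = 0 := by rw [hip_symm]; exact horthvz _ kV' Z hZ
    have s1 : ip ⁅Btil, V⁆ V' = -ip V ⁅Btil, V'⁆ :=
      hskew Btil hBtilk V (Submodule.mem_sup_left hV) V' (Submodule.mem_sup_left hV')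
    have s2 : ip ⁅Btil, Z⁆ Z' = -ip Z ⁅Btil, Z'⁆ :=
      hskew Btil hBtilk Z (Submodule.mem_sup_right hZ) Z' (Submodule.mem_sup_right hZ')
    simp only [map_add, map_sub, map_smul, LinearMap.add_apply, LinearMap.sub_apply,
      LinearMap.smul_apply, smul_eq_mul, z1, z2, z3, z4, z5, z6, z7, z8, z9, z10, z11,
      z12, z13, z14, s1, s2]
    ring
  -- normality on g
  have hswap : ∀ x : g, ⁅Btil, ⁅B, x⁆⁆ = ⁅B, ⁅Btil, x⁆⁆ := by
    intro x
    rw [leibniz_lie, hBtilB0, zero_lie, zero_add]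
  have hcomm : ∀ x : g, Dg (Eg x) = Eg (Dg x) := by
    intro x
    rw [hEg_apply, hDg_apply, hDg_apply, hEg_apply]
    simp only [lie_add, lie_sub, add_lie, sub_lie, hswap]
    abel
  -- key invariance: Dg maps 𝔰n into 𝔰n
  have h𝔰nN : ∀ x ∈ 𝔰n, x ∈ N := by
    rintro x ⟨s, hs, rfl⟩
    exact hτN s
  have hinv : ∀ x ∈ 𝔰n, Dg x ∈ 𝔰n := by
    rintro x ⟨s, hs, rfl⟩
    have h1 : ⁅Btil + B, s⁆ ∈ 𝔰 := 𝔰.lie_mem hBtilB hs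
    have hπs : ⁅Btil, π s⁆ = 0 := hsc Btil hBtil_c (π s) ⟨s, hs, rfl⟩
    have hBπs : ⁅B, π s⁆ = 0 := by
      have h := hkB (π s) (hπ s)
      rw [← lie_skew, h, neg_zero]
    have h2 : ⁅Btil + B, s⁆ = Dg (τ s) := by
      conv_lhs => rw [← hπτ s]
      rw [hDg_apply]
      simp only [add_lie, lie_add, hπs, hBπs]
      abel
    have h3 : τ ⁅Btil + B, s⁆ = Dg (τ s) := by
      rw [h2]
      exact hτ_id _ (hDmaps _ (hτN s))
    exact ⟨⁅Btil + B, s⁆, h1, h3⟩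
  -- inner product space structure on N
  let core : InnerProductSpace.Core ℝ N :=
    { inner := fun x y => ip x y
      conj_inner_symm := by
        intro x y
        simpa using hip_symm (y : g) (x : g)
      re_inner_nonneg := by
        intro x
        by_cases h : (x : g) = 0
        · simp [h]
        · simpa using le_of_lt (hip_pos (x : g) x.2 h)
      add_left := by
        intro x y z
        simp [Submodule.coe_add]
      smul_left := by
        intro x y r
        simp [Submodule.coe_smul]
      definite := by
        intro x hx
        by_contra hne
        have h : (x : g) ≠ 0 := fun h0 => hne (Subtype.ext h0)
        exact absurd hx (ne_of_gt (hip_pos (x : g) x.2 h))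
    }
  letI : NormedAddCommGroup N := core.toNormedAddCommGroup
  letI : InnerProductSpace ℝ N := InnerProductSpace.ofCore core.toCore
  haveI : FiniteDimensional ℝ N := inferInstance
  set T : N →ₗ[ℝ] N := Dg.restrict hDmaps with hT
  set T' : N →ₗ[ℝ] N := Eg.restrict hEmaps with hT'
  have hadj : LinearMap.adjoint T = T' := by
    symm
    rw [LinearMap.eq_adjoint_iff]
    intro x y
    exact hsym (x : g) x.2 (y : g) y.2
  have hnormal : T * LinearMap.adjoint T = LinearMap.adjoint T * T := by
    rw [hadj]
    refine LinearMap.ext fun x => Subtype.ext ?_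
    exact hcomm (x : g)
  set W : Submodule ℝ N := 𝔰n.comap N.subtype with hW
  have hWT : ∀ x ∈ W, T x ∈ W := by
    intro x hx
    exact hinv (x : g) hx
  have hfinal := adjoint_mem_of_invariant' T hnormal W hWT
  intro x hx
  have hxN : x ∈ N := h𝔰nN x hx
  have hx' : (⟨x, hxN⟩ : N) ∈ W := hx
  have h1 : Dg x ∈ 𝔰n := hinv x hx
  have h2 : Eg x ∈ 𝔰n := by
    have h := hfinal ⟨x, hxN⟩ hx'
    rw [hadj] at h
    exact h
  have e : Dg x - Eg x = (2:ℝ) • ⁅Btil, x⁆ := by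
    rw [hDg_apply, hEg_apply, two_smul]
    abel
  have e2 : ⁅Btil, x⁆ = (2⁻¹ : ℝ) • (Dg x - Eg x) := by
    rw [e, smul_smul]
    norm_num
  rw [e2]
  exact Submodule.smul_mem _ _ (Submodule.sub_mem _ h1 h2)
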